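/- Let X be a real m×n matrix, B a real m×m symmetric positive definite matrix, s > 0, and E symmetric n×n with ‖E‖₂ ≤ s/10. If R is invertible with RᵀR = XᵀBX + sI + E, then ‖B^{1/2}XR⁻¹‖₂ ≤ 1.5. -/

import Mathlib

open Matrix BigOperators

noncomputable def spec {m n : ℕ} (A : Matrix (Fin m) (Fin n) ℝ) : ℝ :=
  ‖LinearMap.toContinuousLinearMap (Matrix.toEuclideanLin A)‖

noncomputable def frob {m n : ℕ} (A : Matrix (Fin m) (Fin n) ℝ) : ℝ :=
  Real.sqrt (∑ i, ∑ j, (A i j)^2)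

noncomputable def sigmaMin {m n : ℕ} (A : Matrix (Fin m) (Fin n) ℝ) : ℝ :=
  ⨅ x : {x : EuclideanSpace ℝ (Fin n) // ‖x‖ = 1}, ‖Matrix.toEuclideanLin A x‖

noncomputable def lamMin {n : ℕ} (A : Matrix (Fin n) (Fin n) ℝ) : ℝ :=
  ⨅ x : {x : EuclideanSpace ℝ (Fin n) // ‖x‖ = 1},
    (inner ℝ (Matrix.toEuclideanLin A x) (x : EuclideanSpace ℝ (Fin n)) : ℝ)

noncomputable def lamMax {n : ℕ} (A : Matrix (Fin n) (Fin n) ℝ) : ℝ :=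
  ⨆ x : {x : EuclideanSpace ℝ (Fin n) // ‖x‖ = 1},
    (inner ℝ (Matrix.toEuclideanLin A x) (x : EuclideanSpace ℝ (Fin n)) : ℝ)

noncomputable def Matrix.PosSemidef.sqrt {m : ℕ} {A : Matrix (Fin m) (Fin m) ℝ} (hA : A.PosSemidef) :
    Matrix (Fin m) (Fin m) ℝ :=
  hA.1.eigenvectorUnitary.1 * diagonal ((↑) ∘ Real.sqrt ∘ hA.1.eigenvalues) *
    (star hA.1.eigenvectorUnitary : Matrix (Fin m) (Fin m) ℝ)
lemma sqrt_transpose_eq {m : ℕ} (B : Matrix (Fin m) (Fin m) ℝ) (hB : B.PosDef) : (hB.posSemidef.sqrt)ᵀ = hB.posSemidef.sqrt := by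
      have hU : ((star hB.posSemidef.1.eigenvectorUnitary : Matrix (Fin m) (Fin m) ℝ)) = (hB.posSemidef.1.eigenvectorUnitary.1)ᵀ := by
        rw [Matrix.star_eq_conjTranspose, Matrix.conjTranspose_eq_transpose_of_trivial]
      rw [Matrix.PosSemidef.sqrt, hU, Matrix.transpose_mul, Matrix.transpose_mul, Matrix.transpose_transpose,
        Matrix.diagonal_transpose, Matrix.mul_assoc]
lemma sqrt_mul_self_eq {m : ℕ} (B : Matrix (Fin m) (Fin m) ℝ) (hB : B.PosDef) : hB.posSemidef.sqrt * hB.posSemidef.sqrt = B := by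
      have hUU : ((star hB.posSemidef.1.eigenvectorUnitary : Matrix (Fin m) (Fin m) ℝ)) * hB.posSemidef.1.eigenvectorUnitary.1 = 1 :=
        Unitary.coe_star_mul_self _
      have hD : diagonal (((↑) ∘ Real.sqrt ∘ hB.posSemidef.1.eigenvalues) : Fin m → ℝ) * diagonal ((↑) ∘ Real.sqrt ∘ hB.posSemidef.1.eigenvalues)
          = diagonal (RCLike.ofReal ∘ hB.posSemidef.1.eigenvalues) := by
        rw [Matrix.diagonal_mul_diagonal]
        congr 1; funext i
        simp [Real.mul_self_sqrt (hB.posSemidef.eigenvalues_nonneg i)]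
      conv_rhs => rw [hB.posSemidef.1.spectral_theorem, Unitary.conjStarAlgAut_apply]
      rw [Matrix.PosSemidef.sqrt, ← hD]
      simp only [Matrix.mul_assoc]
      rw [← Matrix.mul_assoc (star _ : Matrix (Fin m) (Fin m) ℝ) _ (diagonal _ * _), hUU, Matrix.one_mul]

lemma te_mul {m n k : ℕ} (A : Matrix (Fin m) (Fin n) ℝ) (C : Matrix (Fin n) (Fin k) ℝ)
    (v : EuclideanSpace ℝ (Fin k)) :
    Matrix.toEuclideanLin (A * C) v = Matrix.toEuclideanLin A (Matrix.toEuclideanLin C v) := by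
  simp [Matrix.toEuclideanLin_apply, Matrix.mulVec_mulVec]

lemma te_adj {m n : ℕ} (A : Matrix (Fin m) (Fin n) ℝ) (x : EuclideanSpace ℝ (Fin n))
    (y : EuclideanSpace ℝ (Fin m)) :
    (inner ℝ x (Matrix.toEuclideanLin Aᵀ y) : ℝ) = inner ℝ (Matrix.toEuclideanLin A x) y := by
  rw [← Matrix.conjTranspose_eq_transpose_of_trivial,
    Matrix.toEuclideanLin_conjTranspose_eq_adjoint]
  exact LinearMap.adjoint_inner_right _ x y

lemma norm_sq_eq {m n : ℕ} (A : Matrix (Fin m) (Fin n) ℝ) (v : EuclideanSpace ℝ (Fin n)) :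
    ‖Matrix.toEuclideanLin A v‖ ^ 2 = (inner ℝ v (Matrix.toEuclideanLin (Aᵀ * A) v) : ℝ) := by
  rw [te_mul, te_adj, ← real_inner_self_eq_norm_sq]

lemma spec_bound {m n : ℕ} (A : Matrix (Fin m) (Fin n) ℝ) (v : EuclideanSpace ℝ (Fin n)) :
    ‖Matrix.toEuclideanLin A v‖ ≤ spec A * ‖v‖ :=
  (LinearMap.toContinuousLinearMap (Matrix.toEuclideanLin A)).le_opNorm v

theorem stmt14 {m n : ℕ} (X : Matrix (Fin m) (Fin n) ℝ)
    (B : Matrix (Fin m) (Fin m) ℝ) (hB : B.PosDef)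
    (s : ℝ) (hs : 0 < s) (E : Matrix (Fin n) (Fin n) ℝ) (hE : Eᵀ = E)
    (hEs : spec E ≤ s / 10) (R : Matrix (Fin n) (Fin n) ℝ) (hRunit : IsUnit R)
    (hchol : Rᵀ * R = Xᵀ * B * X + s • (1 : Matrix (Fin n) (Fin n) ℝ) + E) :
    spec (hB.posSemidef.sqrt * X * R⁻¹) ≤ 1.5 := by
  set S := hB.posSemidef.sqrt with hSdef
  set M := S * X * R⁻¹ with hMdef
  have hRdet : IsUnit R.det := (Matrix.isUnit_iff_isUnit_det R).mp hRunit
  have hRinv : R * R⁻¹ = 1 := Matrix.mul_nonsing_inv R hRdet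
  have hRTinv : R⁻¹ᵀ * Rᵀ = 1 := by
    rw [Matrix.transpose_nonsing_inv]
    exact Matrix.nonsing_inv_mul Rᵀ (by simpa [Matrix.det_transpose] using hRdet)
  have hSsymm : Sᵀ = S := by
    exact sqrt_transpose_eq B hB
  have hSS : S * S = B := sqrt_mul_self_eq B hB
  -- key matrix identity
  have hkey : Mᵀ * M = 1 - s • (R⁻¹ᵀ * R⁻¹) - R⁻¹ᵀ * E * R⁻¹ := by
    have hXBX : Xᵀ * B * X = Rᵀ * R - s • (1 : Matrix (Fin n) (Fin n) ℝ) - E := by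
      rw [hchol]; abel
    have h2 : Mᵀ * M = R⁻¹ᵀ * (Xᵀ * B * X) * R⁻¹ := by
      rw [hMdef, Matrix.transpose_mul, Matrix.transpose_mul, hSsymm, ← hSS]
      simp only [Matrix.mul_assoc]
    have h1 : R⁻¹ᵀ * (Rᵀ * R) * R⁻¹ = 1 := by
      rw [← Matrix.mul_assoc, hRTinv, Matrix.one_mul, hRinv]
    rw [h2, hXBX]
    simp only [Matrix.sub_mul, Matrix.mul_sub, Matrix.smul_mul, Matrix.mul_smul,
      Matrix.one_mul, Matrix.mul_one, h1, Matrix.mul_assoc]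
  -- analytic part
  have key : ∀ v : EuclideanSpace ℝ (Fin n), ‖Matrix.toEuclideanLin M v‖ ≤ 1 * ‖v‖ := by
    intro v
    set w : EuclideanSpace ℝ (Fin n) := Matrix.toEuclideanLin R⁻¹ v with hw
    have hsq : ‖Matrix.toEuclideanLin M v‖ ^ 2
        = (inner ℝ v (Matrix.toEuclideanLin (Mᵀ * M) v) : ℝ) := norm_sq_eq M v
    have hEterm : |(inner ℝ w (Matrix.toEuclideanLin E w) : ℝ)| ≤ (s/10) * ‖w‖^2 := by
      calc |(inner ℝ w (Matrix.toEuclideanLin E w) : ℝ)|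
          ≤ ‖w‖ * ‖Matrix.toEuclideanLin E w‖ := abs_real_inner_le_norm _ _
        _ ≤ ‖w‖ * (spec E * ‖w‖) := by
            exact mul_le_mul_of_nonneg_left (spec_bound E w) (norm_nonneg w)
        _ ≤ ‖w‖ * ((s/10) * ‖w‖) := by
            have := mul_le_mul_of_nonneg_right hEs (norm_nonneg w)
            nlinarith [norm_nonneg w]
        _ = (s/10) * ‖w‖^2 := by ring
    have hdecomp : ‖Matrix.toEuclideanLin M v‖ ^ 2
        = ‖v‖^2 - s * ‖w‖^2 - (inner ℝ w (Matrix.toEuclideanLin E w) : ℝ) := by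
      rw [hsq, hkey]
      have e1 : Matrix.toEuclideanLin (1 - s • (R⁻¹ᵀ * R⁻¹) - R⁻¹ᵀ * E * R⁻¹) v
          = Matrix.toEuclideanLin (1 : Matrix (Fin n) (Fin n) ℝ) v
            - s • Matrix.toEuclideanLin (R⁻¹ᵀ * R⁻¹) v
            - Matrix.toEuclideanLin (R⁻¹ᵀ * E * R⁻¹) v := by
        simp only [map_sub, _root_.map_smul, LinearMap.sub_apply, LinearMap.smul_apply]
      rw [e1, inner_sub_right, inner_sub_right, real_inner_smul_right]
      have eid : Matrix.toEuclideanLin (1 : Matrix (Fin n) (Fin n) ℝ) v = v := by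
        simp [Matrix.toEuclideanLin_apply]
      have e2 : (inner ℝ v (Matrix.toEuclideanLin (R⁻¹ᵀ * R⁻¹) v) : ℝ) = ‖w‖^2 := by
        rw [te_mul, te_adj, ← hw, real_inner_self_eq_norm_sq]
      have e3 : (inner ℝ v (Matrix.toEuclideanLin (R⁻¹ᵀ * E * R⁻¹) v) : ℝ)
          = inner ℝ w (Matrix.toEuclideanLin E w) := by
        have : R⁻¹ᵀ * E * R⁻¹ = R⁻¹ᵀ * (E * R⁻¹) := by rw [Matrix.mul_assoc]
        rw [this, te_mul, te_adj, te_mul, hw]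
      rw [eid, e2, e3, real_inner_self_eq_norm_sq]
    have hub : ‖Matrix.toEuclideanLin M v‖ ^ 2 ≤ ‖v‖^2 := by
      rw [hdecomp]
      have habs := (abs_le.mp hEterm).1
      nlinarith [norm_nonneg w, sq_nonneg ‖w‖]
    have := Real.sqrt_le_sqrt hub
    rw [Real.sqrt_sq (norm_nonneg _), Real.sqrt_sq (norm_nonneg _)] at this
    linarith
  have h1 : spec M ≤ 1 := by
    apply ContinuousLinearMap.opNorm_le_bound _ zero_le_one
    intro v
    simpa using key v
  linarith [h1]
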